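/- Let Γ : ℝ → ℝ² be a β-periodic, twice continuously differentiable curve with |Γ'(s)| = 1 for all s, injective on [0, β), whose image is the boundary of a bounded open set Ω ⊂ ℝ². Then there exists δ₀ > 0 such that for every s₀ ∈ [0, β] and every 0 < δ < δ₀, the circle {x ∈ ℝ² : |x − Γ(s₀)| = δ} intersects the image of Γ in exactly two points. -/

import Mathlib

set_option maxHeartbeats 1000000

open scoped InnerProductSpace


open Set

noncomputable section

/-- The Euclidean plane. -/
abbrev R2 : Type := EuclideanSpace ℝ (Fin 2)

private theorem aux_reduce {α : Type*} (f : ℝ → α) (β : ℝ) (hβ : 0 < β)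
    (hper : Function.Periodic f β) (s a : ℝ) :
    ∃ t ∈ Ico a (a + β), f t = f s := by
  refine ⟨s - ⌊(s - a)/β⌋ * β, ?_, hper.sub_int_mul_eq _⟩
  have h1 := Int.sub_floor_div_mul_nonneg (s - a) hβ
  have h2 := Int.sub_floor_div_mul_lt (s - a) hβ
  constructor <;> [linarith; linarith]

private theorem aux_deriv_per {E : Type*} [NormedAddCommGroup E] [NormedSpace ℝ E]
    (f : ℝ → E) (β : ℝ) (hper : Function.Periodic f β) :
    Function.Periodic (deriv f) β := by
  intro x
  have h : (fun y => f (y + β)) = f := funext hper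
  calc deriv f (x + β) = deriv (fun y => f (y + β)) x := (deriv_comp_add_const f β x).symm
  _ = deriv f x := by rw [h]

private theorem aux_inj {α : Type*} (Γ : ℝ → α) (β : ℝ) (hβ : 0 < β)
    (hper : Function.Periodic Γ β) (hinj : Set.InjOn Γ (Set.Ico 0 β))
    {u v : ℝ} (h : Γ u = Γ v) (hlt : |u - v| < β) : u = v := by
  have h1 := Int.sub_floor_div_mul_nonneg (u - 0) hβ
  have h2 := Int.sub_floor_div_mul_lt (u - 0) hβ
  have h3 := Int.sub_floor_div_mul_nonneg (v - 0) hβ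
  have h4 := Int.sub_floor_div_mul_lt (v - 0) hβ
  set m := (⌊(u - 0)/β⌋ : ℤ)
  set n := (⌊(v - 0)/β⌋ : ℤ)
  have hu : Γ (u - m * β) = Γ u := hper.sub_int_mul_eq m
  have hv : Γ (v - n * β) = Γ v := hper.sub_int_mul_eq n
  have key : u - m * β = v - n * β := by
    apply hinj ⟨by linarith, by linarith⟩ ⟨by linarith, by linarith⟩
    rw [hu, hv, h]
  have hmn : ((m - n : ℤ) : ℝ) * β = u - v := by push_cast; linarith
  have hmn2 : m = n := by
    by_contra hne
    have hone : (1 : ℝ) ≤ |((m - n : ℤ) : ℝ)| := by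
      rw [← Int.cast_abs]
      exact_mod_cast Int.one_le_abs (sub_ne_zero.mpr hne)
    have habs : |((m - n : ℤ) : ℝ)| * β = |u - v| := by
      rw [← abs_of_pos hβ, ← abs_mul, hmn]
    nlinarith [abs_nonneg (u - v)]
  rw [hmn2] at hmn; simp at hmn; linarith

private theorem aux_taylor {E : Type*} [NormedAddCommGroup E] [NormedSpace ℝ E] (Γ : ℝ → E)
    (hd : Differentiable ℝ Γ) (M : ℝ) (hM0 : 0 ≤ M)
    (hLip : ∀ s t, ‖deriv Γ s - deriv Γ t‖ ≤ M * |s - t|) (s t : ℝ) :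
    ‖Γ s - Γ t - (s - t) • deriv Γ t‖ ≤ M * |s - t| * |s - t| := by
  set v := deriv Γ t with hv
  set g : ℝ → E := fun u => Γ u - u • v with hg
  have hder : ∀ u, HasDerivAt g (deriv Γ u - v) u := by
    intro u
    have h1 : HasDerivAt (fun u : ℝ => u • v) ((1:ℝ) • v) u :=
      (hasDerivAt_id u).smul_const v
    have h2 := (hd u).hasDerivAt.sub h1
    rw [one_smul] at h2
    exact h2
  have hmem : ∀ u ∈ uIcc s t, ‖deriv Γ u - v‖ ≤ M * |s - t| := by
    intro u hu
    have habs : |u - t| ≤ |s - t| := by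
      rcases Set.mem_uIcc.mp hu with ⟨h1, h2⟩ | ⟨h1, h2⟩ <;>
        rcases abs_cases (s - t) with ⟨e, _⟩ | ⟨e, _⟩ <;>
        rcases abs_cases (u - t) with ⟨f, _⟩ | ⟨f, _⟩ <;> linarith
    calc ‖deriv Γ u - v‖ ≤ M * |u - t| := hLip u t
    _ ≤ M * |s - t| := mul_le_mul_of_nonneg_left habs hM0
  have key := (convex_uIcc s t).norm_image_sub_le_of_norm_hasDerivWithin_le
    (fun u _ => (hder u).hasDerivWithinAt) hmem right_mem_uIcc left_mem_uIcc
  have heq : g s - g t = Γ s - Γ t - (s - t) • v := by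
    simp only [hg, sub_smul]; abel
  rw [heq] at key
  simpa [Real.norm_eq_abs] using key

/-- **Two-point intersection of small circles with a `C²` boundary curve.**
If `Γ : ℝ → ℝ²` is a `β`-periodic `C²` curve parametrized by arc length, injective on
`[0,β)`, whose image is the boundary of a bounded open set `Ω`, then there is `δ₀ > 0`
such that for all `s₀ ∈ [0,β]` and `0 < δ < δ₀` the circle of radius `δ` about `Γ s₀`
meets the image of `Γ` in exactly two points. -/
theorem circle_meets_C2_boundary_in_two_points
    (Ω : Set R2) (hopen : IsOpen Ω) (hbd : Bornology.IsBounded Ω)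
    (Γ : ℝ → R2) (β : ℝ) (hβ : 0 < β)
    (hper : Function.Periodic Γ β)
    (hsm : ContDiff ℝ 2 Γ)
    (hunit : ∀ s, ‖deriv Γ s‖ = 1)
    (hinj : Set.InjOn Γ (Set.Ico 0 β))
    (himg : Set.range Γ = frontier Ω) :
    ∃ δ₀ > 0, ∀ s₀ ∈ Set.Icc (0 : ℝ) β, ∀ δ, 0 < δ → δ < δ₀ →
      (Metric.sphere (Γ s₀) δ ∩ Set.range Γ).encard = 2 := by
  classical
  -- unpack smoothness
  have h2 : ContDiff ℝ ((1:WithTop ℕ∞) + 1) Γ := hsm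
  rw [contDiff_succ_iff_deriv] at h2
  obtain ⟨hdΓ, -, h1⟩ := h2
  rw [contDiff_one_iff_deriv] at h1
  obtain ⟨hdD, hcD2⟩ := h1
  have hcΓ : Continuous Γ := hdΓ.continuous
  have hperD : Function.Periodic (deriv Γ) β := aux_deriv_per Γ β hper
  have hperD2 : Function.Periodic (deriv (deriv Γ)) β := aux_deriv_per (deriv Γ) β hperD
  -- bound on the second derivative
  obtain ⟨x₀, -, hx₀⟩ := isCompact_Icc.exists_isMaxOn (nonempty_Icc.mpr hβ.le)
    (hcD2.norm.continuousOn (s := Icc (0:ℝ) β))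
  set M := max ‖deriv (deriv Γ) x₀‖ 1 with hMdef
  have hM1 : (1:ℝ) ≤ M := le_max_right _ _
  have hMpos : (0:ℝ) < M := lt_of_lt_of_le one_pos hM1
  have hM2 : ∀ s, ‖deriv (deriv Γ) s‖ ≤ M := by
    intro s
    obtain ⟨t, ht, hts⟩ := aux_reduce (deriv (deriv Γ)) β hβ hperD2 s 0
    rw [← hts]
    exact le_trans (hx₀ ⟨ht.1, by have := ht.2; linarith⟩) (le_max_left _ _)
  -- Lipschitz bound on the first derivative
  have hLip : ∀ s t, ‖deriv Γ s - deriv Γ t‖ ≤ M * |s - t| := by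
    intro s t
    have key := convex_univ.norm_image_sub_le_of_norm_deriv_le (f := deriv Γ)
      (fun x _ => hdD x) (fun x _ => hM2 x) (mem_univ t) (mem_univ s)
    simpa [Real.norm_eq_abs] using key
  have hTay : ∀ s t, ‖Γ s - Γ t - (s - t) • deriv Γ t‖ ≤ M * |s - t| * |s - t| :=
    aux_taylor Γ hdΓ M hMpos.le hLip
  -- lower bound for nearby parameters
  have hlow : ∀ s t, |s - t| ≤ 1/(2*M) → |s - t| / 2 ≤ ‖Γ s - Γ t‖ := by
    intro s t h
    have h1 := hTay s t
    have h2 : ‖(s - t) • deriv Γ t‖ = |s - t| := by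
      rw [norm_smul, Real.norm_eq_abs, hunit t, mul_one]
    have h3 : ‖(s - t) • deriv Γ t‖ - ‖Γ s - Γ t‖ ≤ ‖Γ s - Γ t - (s - t) • deriv Γ t‖ := by
      have hns := norm_sub_norm_le ((s - t) • deriv Γ t) (Γ s - Γ t)
      rwa [norm_sub_rev ((s - t) • deriv Γ t) (Γ s - Γ t)] at hns
    have hMst : M * |s - t| ≤ 1/2 := by
      have := mul_le_mul_of_nonneg_left h hMpos.le
      calc M * |s - t| ≤ M * (1/(2*M)) := this
      _ = 1/2 := by field_simp
    nlinarith [abs_nonneg (s - t), norm_nonneg (Γ s - Γ t)]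
  -- choice of ε
  set ε := min (1/(4*M)) (β/4) with hεdef
  have hεpos : 0 < ε := lt_min (by positivity) (by positivity)
  have hεM : ε ≤ 1/(4*M) := min_le_left _ _
  have hεβ : ε ≤ β/4 := min_le_right _ _
  have hMε : M * ε ≤ 1/4 := by
    have h := mul_le_mul_of_nonneg_left hεM hMpos.le
    calc M * ε ≤ M * (1/(4*M)) := h
    _ = 1/4 := by field_simp
  have hε2M : ε ≤ 1/(2*M) := by
    have : (1:ℝ)/(4*M) ≤ 1/(2*M) := by
      apply div_le_div_of_nonneg_left one_pos.le (by positivity) (by linarith)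
    linarith
  -- separation constant
  set K : Set (ℝ × ℝ) := (Icc (-β) (2*β) ×ˢ Icc 0 β) ∩
    {p | ε ≤ |p.1 - p.2| ∧ |p.1 - p.2| ≤ β/2} with hKdef
  have hKcl : IsClosed {p : ℝ × ℝ | ε ≤ |p.1 - p.2| ∧ |p.1 - p.2| ≤ β/2} := by
    have hc : Continuous fun p : ℝ × ℝ => |p.1 - p.2| :=
      (continuous_fst.sub continuous_snd).abs
    exact (isClosed_le continuous_const hc).inter (isClosed_le hc continuous_const)
  have hKcomp : IsCompact K := (isCompact_Icc.prod isCompact_Icc).inter_right hKcl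
  have hKne : K.Nonempty := by
    refine ⟨(ε, 0), ⟨?_, ?_⟩⟩
    · simp only [Set.mem_prod, Set.mem_Icc]
      exact ⟨⟨by linarith, by linarith⟩, le_refl 0, hβ.le⟩
    · simp only [Set.mem_setOf_eq, sub_zero, abs_of_pos hεpos]
      exact ⟨le_refl ε, by linarith⟩
  obtain ⟨p₀, hp₀K, hp₀min⟩ := hKcomp.exists_isMinOn hKne
    (((hcΓ.comp continuous_fst).sub (hcΓ.comp continuous_snd)).norm.continuousOn)
  set c := ‖Γ p₀.1 - Γ p₀.2‖ with hcdef
  have hcpos : 0 < c := by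
    rcases (norm_nonneg (Γ p₀.1 - Γ p₀.2)).lt_or_eq with h | h
    · exact h
    · exfalso
      have heq : Γ p₀.1 = Γ p₀.2 := by
        have := sub_eq_zero.mp (norm_eq_zero.mp h.symm)
        exact this
      have hβ2 : |p₀.1 - p₀.2| < β := lt_of_le_of_lt hp₀K.2.2 (by linarith)
      have := aux_inj Γ β hβ hper hinj heq hβ2
      have hε1 := hp₀K.2.1
      rw [this, sub_self, abs_zero] at hε1
      linarith
  have hsep : ∀ u t, u ∈ Icc (-β) (2*β) → t ∈ Icc 0 β → ε ≤ |u - t| → |u - t| ≤ β/2 →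
      c ≤ ‖Γ u - Γ t‖ := by
    intro u t h1 h2 h3 h4
    have hmem : (u, t) ∈ K := ⟨Set.mem_prod.mpr ⟨h1, h2⟩, by exact ⟨h3, h4⟩⟩
    simpa using isMinOn_iff.mp hp₀min (u, t) hmem
  -- the radius bound
  refine ⟨min c (ε/2), lt_min hcpos (by positivity), ?_⟩
  intro s₀ hs₀ δ hδpos hδlt
  have hδc : δ < c := lt_of_lt_of_le hδlt (min_le_left _ _)
  have hδε : δ < ε/2 := lt_of_lt_of_le hδlt (min_le_right _ _)
  -- the squared distance function
  set φ : ℝ → ℝ := fun s => ⟪Γ s - Γ s₀, Γ s - Γ s₀⟫_ℝ with hφdef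
  have hφnorm : ∀ s, φ s = ‖Γ s - Γ s₀‖ ^ 2 := fun s => real_inner_self_eq_norm_sq _
  have hφcont : Continuous φ := (hcΓ.sub continuous_const).inner (hcΓ.sub continuous_const)
  have hφ0 : φ s₀ = 0 := by simp [hφdef]
  have hφder : ∀ s, HasDerivAt φ (2 * ⟪deriv Γ s, Γ s - Γ s₀⟫_ℝ) s := by
    intro s
    have hf : HasDerivAt (fun u => Γ u - Γ s₀) (deriv Γ s) s :=
      (hdΓ s).hasDerivAt.sub_const _
    have h := hf.inner ℝ hf
    refine h.congr_deriv ?_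
    rw [real_inner_comm (Γ s - Γ s₀) (deriv Γ s)]
    ring
  -- key inner product estimate
  have hkey : ∀ s, |⟪deriv Γ s, Γ s - Γ s₀⟫_ℝ - (s - s₀)| ≤ M * |s - s₀| * |s - s₀| := by
    intro s
    have hE := hTay s₀ s
    have hE' : ‖Γ s - Γ s₀ - (s - s₀) • deriv Γ s‖ ≤ M * |s - s₀| * |s - s₀| := by
      have heq : Γ s - Γ s₀ - (s - s₀) • deriv Γ s
          = -(Γ s₀ - Γ s - (s₀ - s) • deriv Γ s) := by
        module
      rw [heq, norm_neg]
      have : |s₀ - s| = |s - s₀| := abs_sub_comm _ _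
      rw [this] at hE
      exact hE
    have hsplit : ⟪deriv Γ s, Γ s - Γ s₀⟫_ℝ - (s - s₀)
        = ⟪deriv Γ s, Γ s - Γ s₀ - (s - s₀) • deriv Γ s⟫_ℝ := by
      simp only [inner_sub_right, real_inner_smul_right, real_inner_self_eq_norm_sq,
        hunit, one_pow]
      ring
    rw [hsplit]
    calc |⟪deriv Γ s, Γ s - Γ s₀ - (s - s₀) • deriv Γ s⟫_ℝ|
        ≤ ‖deriv Γ s‖ * ‖Γ s - Γ s₀ - (s - s₀) • deriv Γ s‖ := abs_real_inner_le_norm _ _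
      _ = ‖Γ s - Γ s₀ - (s - s₀) • deriv Γ s‖ := by rw [hunit, one_mul]
      _ ≤ M * |s - s₀| * |s - s₀| := hE'
  -- monotonicity on both sides
  have hmono : StrictMonoOn φ (Icc s₀ (s₀ + ε)) := by
    apply strictMonoOn_of_deriv_pos (convex_Icc _ _) hφcont.continuousOn
    intro x hx
    rw [interior_Icc] at hx
    rw [(hφder x).deriv]
    have hk := hkey x
    have hxs : |x - s₀| = x - s₀ := abs_of_pos (by linarith [hx.1])
    rw [hxs] at hk
    have h1 : M * (x - s₀) ≤ M * ε := mul_le_mul_of_nonneg_left (by linarith [hx.2]) hMpos.le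
    have h2 := abs_le.mp hk
    nlinarith [hx.1, hx.2]
  have hanti : StrictAntiOn φ (Icc (s₀ - ε) s₀) := by
    apply strictAntiOn_of_deriv_neg (convex_Icc _ _) hφcont.continuousOn
    intro x hx
    rw [interior_Icc] at hx
    rw [(hφder x).deriv]
    have hk := hkey x
    have hxs : |x - s₀| = s₀ - x := by rw [abs_sub_comm]; exact abs_of_pos (by linarith [hx.2])
    rw [hxs] at hk
    have h1 : M * (s₀ - x) ≤ M * ε := mul_le_mul_of_nonneg_left (by linarith [hx.1]) hMpos.le
    have h2 := abs_le.mp hk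
    nlinarith [hx.1, hx.2]
  -- boundary values
  have hδsq : δ ^ 2 < (ε/2) ^ 2 := by nlinarith
  have hb : δ ^ 2 ≤ φ (s₀ + ε) := by
    have h := hlow (s₀ + ε) s₀ (by rw [add_sub_cancel_left, abs_of_pos hεpos]; exact hε2M)
    rw [add_sub_cancel_left, abs_of_pos hεpos] at h
    rw [hφnorm]
    nlinarith [norm_nonneg (Γ (s₀ + ε) - Γ s₀)]
  have ha : δ ^ 2 ≤ φ (s₀ - ε) := by
    have h := hlow (s₀ - ε) s₀ (by rw [sub_sub_cancel_left, abs_neg, abs_of_pos hεpos]; exact hε2M)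
    rw [sub_sub_cancel_left, abs_neg, abs_of_pos hεpos] at h
    rw [hφnorm]
    nlinarith [norm_nonneg (Γ (s₀ - ε) - Γ s₀)]
  -- intermediate values
  obtain ⟨sp, hspmem, hspval⟩ : ∃ x ∈ Icc s₀ (s₀ + ε), φ x = δ ^ 2 := by
    have h := intermediate_value_Icc (by linarith : s₀ ≤ s₀ + ε) hφcont.continuousOn
    have hmem : δ ^ 2 ∈ Icc (φ s₀) (φ (s₀ + ε)) := ⟨by rw [hφ0]; positivity, hb⟩
    obtain ⟨x, hx, hxv⟩ := h hmem
    exact ⟨x, hx, hxv⟩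
  obtain ⟨sm, hsmmem, hsmval⟩ : ∃ x ∈ Icc (s₀ - ε) s₀, φ x = δ ^ 2 := by
    have h := intermediate_value_Icc' (by linarith : s₀ - ε ≤ s₀) hφcont.continuousOn
    have hmem : δ ^ 2 ∈ Icc (φ s₀) (φ (s₀ - ε)) := ⟨by rw [hφ0]; positivity, ha⟩
    obtain ⟨x, hx, hxv⟩ := h hmem
    exact ⟨x, hx, hxv⟩
  have hspne : s₀ < sp := by
    rcases hspmem.1.lt_or_eq with h | h
    · exact h
    · exfalso; rw [← h, hφ0] at hspval; nlinarith
  have hsmne : sm < s₀ := by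
    rcases hsmmem.2.lt_or_eq with h | h
    · exact h
    · exfalso; rw [h, hφ0] at hsmval; nlinarith
  -- norms of the two points
  have norm_of_sq : ∀ x : R2, ‖x‖ ^ 2 = δ ^ 2 → ‖x‖ = δ := by
    intro x hx
    rw [← Real.sqrt_sq (norm_nonneg x), hx, Real.sqrt_sq hδpos.le]
  have hnormsp : ‖Γ sp - Γ s₀‖ = δ := norm_of_sq _ (by rw [← hφnorm, hspval])
  have hnormsm : ‖Γ sm - Γ s₀‖ = δ := norm_of_sq _ (by rw [← hφnorm, hsmval])
  -- the two intersection points are distinct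
  have hdist : Γ sm ≠ Γ sp := by
    intro h
    have h1 : |sp - sm| ≤ 1/(2*M) := by
      have h0 : |sp - sm| ≤ 2*ε := by
        rw [abs_of_pos (by linarith : (0:ℝ) < sp - sm)]
        linarith [hspmem.2, hsmmem.1]
      calc |sp - sm| ≤ 2*ε := h0
      _ ≤ 2 * (1/(4*M)) := by linarith
      _ = 1/(2*M) := by field_simp; ring
    have h2 := hlow sp sm h1
    rw [← h, sub_self, norm_zero] at h2
    have h3 : 0 < |sp - sm| := abs_pos.mpr (by intro h4; linarith [sub_eq_zero.mp h4])
    linarith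
  -- the intersection is exactly the two points
  have hset : Metric.sphere (Γ s₀) δ ∩ range Γ = {Γ sm, Γ sp} := by
    apply Subset.antisymm
    · rintro x ⟨hx1, s, rfl⟩
      have hdists : dist (Γ s) (Γ s₀) = δ := hx1
      obtain ⟨t, ht, hts⟩ := aux_reduce Γ β hβ hper s (s₀ - β/2)
      have hnorm : ‖Γ t - Γ s₀‖ = δ := by
        rw [hts, ← dist_eq_norm]; exact hdists
      have htβ : |t - s₀| ≤ β/2 := by
        rcases abs_cases (t - s₀) with ⟨h', _⟩ | ⟨h', _⟩ <;>
          [linarith [ht.2]; linarith [ht.1]]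
      have htε : |t - s₀| < ε := by
        by_contra hcon
        push_neg at hcon
        have hmem1 : t ∈ Icc (-β) (2*β) :=
          ⟨by linarith [ht.1, hs₀.1], by linarith [ht.2, hs₀.2]⟩
        have hc2 := hsep t s₀ hmem1 hs₀ hcon htβ
        rw [hnorm] at hc2; linarith
      have htne : t ≠ s₀ := by
        intro h'; rw [h', sub_self, norm_zero] at hnorm; linarith
      have hφt : φ t = δ ^ 2 := by rw [hφnorm, hnorm]
      rcases lt_or_gt_of_ne htne with hlt | hgt
      · have hmem2 : t ∈ Icc (s₀ - ε) s₀ := ⟨by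
          rcases abs_cases (t - s₀) with ⟨h', _⟩|⟨h', _⟩ <;> linarith, hlt.le⟩
        have heq : t = sm := hanti.injOn hmem2 hsmmem (hφt.trans hsmval.symm)
        rw [← hts, heq]
        exact Set.mem_insert _ _
      · have hmem2 : t ∈ Icc s₀ (s₀ + ε) := ⟨hgt.le, by
          rcases abs_cases (t - s₀) with ⟨h', _⟩|⟨h', _⟩ <;> linarith⟩
        have heq : t = sp := hmono.injOn hmem2 hspmem (hφt.trans hspval.symm)
        rw [← hts, heq]
        exact Set.mem_insert_of_mem _ rfl
    · rintro x (rfl | rfl)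
      · exact ⟨by simpa [Metric.mem_sphere, dist_eq_norm] using hnormsm, ⟨sm, rfl⟩⟩
      · exact ⟨by simpa [Metric.mem_sphere, dist_eq_norm] using hnormsp, ⟨sp, rfl⟩⟩
  rw [hset]
  exact Set.encard_pair hdist
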